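/- Let X and Y be second-countable, locally compact, Hausdorff, totally disconnected topological spaces and let σ : X → Y be a surjective local homeomorphism. Then there exists a section φ : Y → X of σ (i.e., σ ∘ φ = id) that is a local homeomorphism. -/

import Mathlib

/-- Let `X` and `Y` be second-countable, locally compact, Hausdorff,
totally disconnected spaces and `σ : X → Y` a surjective local homeomorphism.
Then `σ` admits a section `φ : Y → X` that is a local homeomorph. -/
theorem exists_section_isLocalHomeomorph
    {X Y : Type*} [TopologicalSpace X] [TopologicalSpace Y]
    [SecondCountableTopology X] [SecondCountableTopology Y]
    [LocallyCompactSpace X] [LocallyCompactSpace Y]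
    [T2Space X] [T2Space Y]
    [TotallyDisconnectedSpace X] [TotallyDisconnectedSpace Y]
    (σ : X → Y) (hsurj : Function.Surjective σ) (hσ : IsLocalHomeomorph σ) :
    ∃ φ : Y → X, (∀ y, σ (φ y) = y) ∧ IsLocalHomeomorph φ := by
  classical
  rcases isEmpty_or_nonempty Y with hY | hY
  · exact ⟨fun y => (hsurj y).choose, fun y => (hsurj y).choose_spec,
      fun y => (IsEmpty.false y).elim⟩
  -- For each `y`, choose a partial homeomorph `e y` (a chart of `σ`) whose target contains `y`.
  have key : ∀ y : Y, ∃ e : OpenPartialHomeomorph X Y, σ = ⇑e ∧ y ∈ e.target := by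
    intro y
    obtain ⟨x, hx⟩ := hsurj y
    obtain ⟨e, hxe, he⟩ := hσ x
    exact ⟨e, he, by rw [← hx, he]; exact e.map_source hxe⟩
  choose e he hyt using key
  -- Choose a clopen neighbourhood `V y ⊆ (e y).target` of each `y`.
  have keyV : ∀ y : Y, ∃ V : Set Y, IsClopen V ∧ y ∈ V ∧ V ⊆ (e y).target := by
    intro y
    obtain ⟨V, hV, hyV, hVs⟩ :=
      loc_compact_Haus_tot_disc_of_zero_dim.exists_subset_of_mem_open (hyt y) (e y).open_target
    exact ⟨V, hV, hyV, hVs⟩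
  choose V hVclopen hmemV hVsub using keyV
  -- Extract a countable subcover.
  obtain ⟨T, hTc, hTU⟩ :=
    TopologicalSpace.isOpen_iUnion_countable V (fun y => (hVclopen y).isOpen)
  have hTne : T.Nonempty := by
    by_contra h
    rw [Set.not_nonempty_iff_eq_empty] at h
    obtain ⟨y⟩ := hY
    have : y ∈ ⋃ i ∈ T, V i := by
      rw [hTU]; exact Set.mem_iUnion.2 ⟨y, hmemV y⟩
    simp [h] at this
  obtain ⟨g, hg⟩ := hTc.exists_eq_range hTne
  -- Every `y` lies in some `V (g n)`.
  have hcov : ∀ y : Y, ∃ n : ℕ, y ∈ V (g n) := by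
    intro y
    have : y ∈ ⋃ i ∈ T, V i := by rw [hTU]; exact Set.mem_iUnion.2 ⟨y, hmemV y⟩
    obtain ⟨i, hiT, hyi⟩ := Set.mem_iUnion₂.1 this
    rw [hg] at hiT
    obtain ⟨n, rfl⟩ := hiT
    exact ⟨n, hyi⟩
  -- Define the section using the least such index.
  set N : Y → ℕ := fun y => Nat.find (hcov y) with hN
  set φ : Y → X := fun y => (e (g (N y))).symm y with hφ
  have hsec : ∀ y, σ (φ y) = y := by
    intro y
    have hy : y ∈ V (g (N y)) := Nat.find_spec (hcov y)
    have : y ∈ (e (g (N y))).target := hVsub _ hy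
    rw [hφ, he (g (N y))]
    exact (e (g (N y))).right_inv this
  refine ⟨φ, hsec, ?_⟩
  -- Local homeomorph: near `y₀` the index `N` is constant.
  apply IsLocalHomeomorph.mk
  intro y₀
  set n := N y₀ with hn
  set W : Set Y := V (g n) ∩ ⋂ m : Fin n, (V (g m))ᶜ with hW
  have hWopen : IsOpen W :=
    (hVclopen (g n)).isOpen.inter
      (isOpen_iInter_of_finite fun m => (hVclopen (g m)).isClosed.isOpen_compl)
  have hy₀W : y₀ ∈ W := by
    refine ⟨Nat.find_spec (hcov y₀), Set.mem_iInter.2 fun m => ?_⟩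
    exact Nat.find_min (hcov y₀) m.2
  have hWN : ∀ y ∈ W, N y = n := by
    rintro y ⟨hy1, hy2⟩
    rw [Set.mem_iInter] at hy2
    refine le_antisymm (Nat.find_le hy1) ?_
    by_contra h
    push_neg at h
    exact hy2 ⟨N y, h⟩ (Nat.find_spec (hcov y))
  have hWsub : W ⊆ (e (g n)).target := fun y hy => hVsub _ hy.1
  refine ⟨(e (g n)).symm.restr W, ?_, ?_⟩
  · rw [OpenPartialHomeomorph.restr_source' _ _ hWopen]
    exact ⟨hWsub hy₀W, hy₀W⟩
  · intro y hy
    rw [OpenPartialHomeomorph.restr_source' _ _ hWopen] at hy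
    have : N y = n := hWN y hy.2
    simp only [hφ, this, OpenPartialHomeomorph.restr_apply]
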